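/- Let Q be a (d-1)-dimensional lattice polytope with h*-coefficients a_i(Q), and let P = Q × [0,m] be the prism of height m ∈ N over Q. Then the h*-coefficients of P satisfy a_i(P) = (mi+1)·a_i(Q) + (m(d-i+1)-1)·a_{i-1}(Q) for 0 ≤ i ≤ d, with the conventions a_d(Q) = a_{-1}(Q) = 0. -/

import Mathlib

open scoped Pointwise

/-- The lattice points of a set `S ⊆ ℝ^ι`: points of `S` all of whose
coordinates are integers. -/
def latticePts {ι : Type*} (S : Set (ι → ℝ)) : Set (ι → ℝ) :=
  {x ∈ S | ∀ j, ∃ n : ℤ, x j = n}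

/-- A convex lattice polytope: the convex hull of finitely many points with
integer coordinates. -/
def IsLatticePolytope {ι : Type*} (P : Set (ι → ℝ)) : Prop :=
  ∃ V : Set (ι → ℝ), V.Finite ∧ V.Nonempty ∧ (∀ v ∈ V, ∀ j, ∃ n : ℤ, v j = n) ∧
    P = convexHull ℝ V

/-- The lattice point enumerator `G(kP)`. -/
noncomputable def ehrCount {ι : Type*} (P : Set (ι → ℝ)) (k : ℕ) : ℕ :=
  (latticePts ((k : ℝ) • P)).ncard

section PS
open PowerSeries

/-- `mk ((mk+1) f k)` in terms of the derivative. -/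
lemma ps_mk_shift (m : ℕ) (f : ℕ → ℚ) :
    PowerSeries.mk (fun k => ((m * k + 1 : ℕ) : ℚ) * f k) =
      PowerSeries.mk f + C (m : ℚ) * (X * d⁄dX ℚ (PowerSeries.mk f)) := by
  ext n
  cases n with
  | zero =>
      simp [coeff_mk, coeff_zero_eq_constantCoeff, map_mul]
  | succ n =>
      rw [map_add, coeff_mk, coeff_mk, coeff_C_mul, coeff_succ_X_mul, coeff_derivative, coeff_mk]
      push_cast
      ring

lemma ps_deriv_mul (d : ℕ) (F A : PowerSeries ℚ) (ha : F * (1 - X) ^ (d + 1) = A) :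
    d⁄dX ℚ F * (1 - X) ^ (d + 1) =
      d⁄dX ℚ A + C ((d : ℚ) + 1) * (F * (1 - X) ^ d) := by
  have hX : d⁄dX ℚ (1 - X : PowerSeries ℚ) = -1 := by
    rw [map_sub, derivative_X, Derivation.map_one_eq_zero, zero_sub]
  have h := congrArg (d⁄dX ℚ) ha
  rw [Derivation.leibniz, Derivation.leibniz_pow, hX] at h
  simp only [smul_eq_mul, nsmul_eq_mul, Nat.add_sub_cancel] at h
  have hC : (C ((d : ℚ) + 1) : PowerSeries ℚ) = (d : PowerSeries ℚ) + 1 := by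
    rw [map_add, map_one, map_natCast]
  rw [hC]
  push_cast at h
  linear_combination h

end PS

lemma ncard_prod' {α β : Type*} (s : Set α) (t : Set β) :
    (s ×ˢ t).ncard = s.ncard * t.ncard := by
  rw [← Nat.card_coe_set_eq, ← Nat.card_coe_set_eq, ← Nat.card_coe_set_eq,
    Nat.card_congr (Equiv.Set.prod s t), Nat.card_prod]

lemma latticePts_zero_smul {κ : Type*} (S : Set (κ → ℝ)) (hS : S.Nonempty) :
    latticePts (((0 : ℕ) : ℝ) • S) = {0} := by
  rw [Nat.cast_zero, Set.zero_smul_set hS]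
  ext x
  constructor
  · rintro ⟨hx, -⟩; exact hx
  · rintro rfl
    exact ⟨rfl, fun j => ⟨0, by simp⟩⟩

lemma count_prism {ι : Type*} (m : ℕ) (Q : Set (ι → ℝ)) (hQne : Q.Nonempty) (k : ℕ) :
    ehrCount {z : ι ⊕ Unit → ℝ | (fun j => z (Sum.inl j)) ∈ Q ∧
        z (Sum.inr ()) ∈ Set.Icc (0 : ℝ) (m : ℝ)} k = (m * k + 1) * ehrCount Q k := by
  set P : Set (ι ⊕ Unit → ℝ) := {z | (fun j => z (Sum.inl j)) ∈ Q ∧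
      z (Sum.inr ()) ∈ Set.Icc (0 : ℝ) (m : ℝ)} with hP
  cases k with
  | zero =>
      have hPne : P.Nonempty := by
        obtain ⟨q, hq⟩ := hQne
        exact ⟨Sum.elim q (fun _ => 0), hq, by simp [Set.mem_Icc, Nat.cast_nonneg]⟩
      rw [ehrCount, ehrCount, latticePts_zero_smul P hPne, latticePts_zero_smul Q hQne]
      simp
  | succ k =>
      set c : ℝ := ((k + 1 : ℕ) : ℝ) with hc
      have hcpos : (0 : ℝ) < c := by positivity
      set T : Set ℝ := {t | t ∈ Set.Icc (0 : ℝ) (c * m) ∧ ∃ n : ℤ, t = n} with hT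
      set e : (ι ⊕ Unit → ℝ) → (ι → ℝ) × ℝ :=
        fun z => (fun j => z (Sum.inl j), z (Sum.inr ())) with he
      have einj : Function.Injective e := by
        intro z w h
        funext x
        cases x with
        | inl j => exact congrFun (congrArg Prod.fst h) j
        | inr u => cases u; exact congrArg Prod.snd h
      have hPQ : c • P = {z : ι ⊕ Unit → ℝ | (fun j => z (Sum.inl j)) ∈ c • Q ∧
          z (Sum.inr ()) ∈ Set.Icc (0 : ℝ) (c * m)} := by
        ext z
        constructor
        · rintro ⟨p, hpP, rfl⟩
          refine ⟨⟨fun j => p (Sum.inl j), hpP.1, rfl⟩, ?_, ?_⟩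
          · exact mul_nonneg hcpos.le hpP.2.1
          · exact mul_le_mul_of_nonneg_left hpP.2.2 hcpos.le
        · rintro ⟨⟨q₀, hq₀, hq⟩, ht0, htm⟩
          refine ⟨Sum.elim q₀ (fun _ => z (Sum.inr ()) / c), ⟨hq₀, ?_, ?_⟩, ?_⟩
          · exact div_nonneg ht0 hcpos.le
          · show z (Sum.inr ()) / c ≤ (m : ℝ)
            rw [div_le_iff₀ hcpos]; linarith [htm]
          · funext x
            cases x with
            | inl j => exact congrFun hq j
            | inr u =>
                cases u
                show c * (z (Sum.inr ()) / c) = z (Sum.inr ())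
                field_simp
      have himg : e '' latticePts (c • P) = latticePts (c • Q) ×ˢ T := by
        ext x
        constructor
        · rintro ⟨z, hz, rfl⟩
          rw [latticePts, Set.mem_sep_iff, hPQ] at hz
          obtain ⟨⟨h1, h2⟩, hint⟩ := hz
          exact ⟨⟨h1, fun j => hint (Sum.inl j)⟩, h2, hint (Sum.inr ())⟩
        · rintro ⟨⟨hx1, hx1i⟩, hx2, hx2i⟩
          refine ⟨Sum.elim x.1 (fun _ => x.2), ?_, rfl⟩
          rw [latticePts, Set.mem_sep_iff, hPQ]
          refine ⟨⟨hx1, hx2⟩, ?_⟩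
          intro j
          cases j with
          | inl j => exact hx1i j
          | inr u => cases u; exact hx2i
      have hTcard : T.ncard = m * (k + 1) + 1 := by
        have hTi : T = (fun n : ℤ => (n : ℝ)) '' (Set.Icc 0 (m * (k + 1) : ℤ)) := by
          ext t
          constructor
          · rintro ⟨⟨ht0, htm⟩, n, rfl⟩
            refine ⟨n, ⟨?_, ?_⟩, rfl⟩
            · exact_mod_cast ht0
            · have : (n : ℝ) ≤ ((m * (k + 1) : ℤ) : ℝ) := by
                push_cast
                rw [hc] at htm; push_cast at htm; linarith
              exact_mod_cast this
          · rintro ⟨n, ⟨hn0, hnm⟩, rfl⟩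
            refine ⟨⟨?_, ?_⟩, n, rfl⟩
            · show (0 : ℝ) ≤ (n : ℝ); exact_mod_cast hn0
            · show (n : ℝ) ≤ c * m
              have : ((n : ℤ) : ℝ) ≤ ((m * (k + 1) : ℤ) : ℝ) := by exact_mod_cast hnm
              rw [hc]; push_cast at this ⊢; linarith
        rw [hTi, Set.ncard_image_of_injective _ Int.cast_injective, ← Finset.coe_Icc,
          Set.ncard_coe_finset, Int.card_Icc]
        rw [show (m * (k + 1) : ℤ) + 1 - 0 = ((m * (k + 1) + 1 : ℕ) : ℤ) by push_cast; ring,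
          Int.toNat_natCast]
      have key : ehrCount P (k + 1) = ehrCount Q (k + 1) * (m * (k + 1) + 1) := by
        rw [ehrCount, ehrCount, ← hc, ← Set.ncard_image_of_injective _ einj, himg, ncard_prod',
          hTcard]
      rw [key, mul_comm]


open PowerSeries

theorem stmt_12 (d : ℕ) (hd : 1 ≤ d) (m : ℕ) (hm : 1 ≤ m)
    (Q : Set (Fin (d - 1) → ℝ))
    (hQ : IsLatticePolytope Q) (hdimQ : affineSpan ℝ Q = ⊤)
    (P : Set ((Fin (d - 1) ⊕ Unit) → ℝ))
    (hPdef : P = {z | (fun j => z (Sum.inl j)) ∈ Q ∧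
      z (Sum.inr ()) ∈ Set.Icc (0 : ℝ) (m : ℝ)})
    (a b : ℕ → ℚ)
    (ha : PowerSeries.mk (fun k => (ehrCount Q k : ℚ)) * (1 - PowerSeries.X) ^ d =
      ∑ i ∈ Finset.range d, PowerSeries.C (a i) * PowerSeries.X ^ i)
    (hb : PowerSeries.mk (fun k => (ehrCount P k : ℚ)) *
        (1 - PowerSeries.X) ^ (d + 1) =
      ∑ i ∈ Finset.range (d + 1), PowerSeries.C (b i) * PowerSeries.X ^ i) :
    ∀ i : ℕ, i ≤ d →
      b i = ((m : ℚ) * i + 1) * (if i < d then a i else 0) +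
        ((m : ℚ) * ((d : ℚ) - i + 1) - 1) * (if 1 ≤ i then a (i - 1) else 0) := by
  -- reduce d = e + 1
  obtain ⟨e, rfl⟩ : ∃ e, d = e + 1 := ⟨d - 1, by omega⟩
  clear hd
  obtain ⟨V, -, hVne, -, hQV⟩ := hQ
  have hQne : Q.Nonempty := by
    rw [hQV]
    exact hVne.mono (subset_convexHull ℝ V)
  have hcount : ∀ k, ehrCount P k = (m * k + 1) * ehrCount Q k := by
    intro k
    rw [hPdef]
    exact count_prism m Q hQne k
  -- power series algebra
  set F := PowerSeries.mk (fun k => (ehrCount Q k : ℚ)) with hF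
  set A := ∑ i ∈ Finset.range (e + 1), C (a i) * (X : ℚ⟦X⟧) ^ i with hA
  have hGP : PowerSeries.mk (fun k => (ehrCount P k : ℚ)) =
      F + C (m : ℚ) * ((X : ℚ⟦X⟧) * d⁄dX ℚ F) := by
    rw [show (fun k => (ehrCount P k : ℚ)) =
        fun k => ((m * k + 1 : ℕ) : ℚ) * ((ehrCount Q k : ℚ)) from
      funext fun k => by rw [hcount k]; push_cast; ring]
    exact ps_mk_shift m _
  have hDF := ps_deriv_mul e F A ha
  have key : (∑ i ∈ Finset.range (e + 1 + 1), C (b i) * (X : ℚ⟦X⟧) ^ i) =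
      (1 - X) * A + C (m : ℚ) *
        (X * ((1 - X) * d⁄dX ℚ A + C ((e : ℚ) + 1) * A)) := by
    rw [← hb, hGP]
    calc (F + C (m : ℚ) * (X * d⁄dX ℚ F)) * (1 - X) ^ (e + 1 + 1)
        = (F * (1 - X) ^ (e + 1)) * (1 - X) +
            C (m : ℚ) * (X * ((d⁄dX ℚ F * (1 - X) ^ (e + 1)) * (1 - X))) := by
          rw [pow_succ]; ring
      _ = A * (1 - X) + C (m : ℚ) *
            (X * ((d⁄dX ℚ A + C ((e : ℚ) + 1) * (F * (1 - X) ^ e)) * (1 - X))) := by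
          rw [ha, hDF]
      _ = (1 - X) * A + C (m : ℚ) *
            (X * ((1 - X) * d⁄dX ℚ A + C ((e : ℚ) + 1) * (F * ((1 - X) ^ e * (1 - X))))) := by
          ring
      _ = _ := by rw [← pow_succ, ha]
  -- coefficients
  set r : ℕ → ℚ := fun i => if i < e + 1 then a i else 0 with hr
  have cA : ∀ i, coeff i A = r i := by
    intro i
    rw [hA, map_sum]
    simp only [coeff_C_mul, coeff_X_pow, mul_ite, mul_one, mul_zero]
    rw [Finset.sum_ite_eq (Finset.range (e + 1)) i a, hr]
    simp [Finset.mem_range]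
  have cB : ∀ i, i ≤ e + 1 → coeff i (∑ j ∈ Finset.range (e + 1 + 1),
      C (b j) * (X : ℚ⟦X⟧) ^ j) = b i := by
    intro i hi
    rw [map_sum]
    simp only [coeff_C_mul, coeff_X_pow, mul_ite, mul_one, mul_zero]
    rw [Finset.sum_ite_eq (Finset.range (e + 1 + 1)) i b]
    simp [Finset.mem_range, Nat.lt_succ_of_le hi]
  have cDA : ∀ n, coeff n (d⁄dX ℚ A) = r (n + 1) * (n + 1) := by
    intro n
    rw [coeff_derivative, cA]
  have cXDA : ∀ n, coeff n ((X : ℚ⟦X⟧) * d⁄dX ℚ A) = r n * n := by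
    intro n
    cases n with
    | zero => simp [coeff_zero_eq_constantCoeff, map_mul]
    | succ p => rw [coeff_succ_X_mul, cDA]; push_cast; ring
  have cXA : ∀ n, coeff n ((X : ℚ⟦X⟧) * A) = if n = 0 then 0 else r (n - 1) := by
    intro n
    cases n with
    | zero => simp [coeff_zero_eq_constantCoeff, map_mul]
    | succ p => rw [coeff_succ_X_mul, cA]; simp
  intro i hi
  have hbi := (cB i hi).symm
  rw [key] at hbi
  have h1 : ((1 : ℚ⟦X⟧) - X) * A = A - X * A := by ring
  have h2 : ((1 : ℚ⟦X⟧) - X) * d⁄dX ℚ A = d⁄dX ℚ A - X * d⁄dX ℚ A := by ring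
  rw [h1, h2] at hbi
  cases i with
  | zero =>
      rw [map_add, map_sub, coeff_C_mul, cA, cXA] at hbi
      simp only [if_pos rfl] at hbi
      rw [show coeff 0 ((X : ℚ⟦X⟧) * (d⁄dX ℚ A - X * d⁄dX ℚ A + C ((e : ℚ) + 1) * A)) =
          0 by simp [coeff_zero_eq_constantCoeff, map_mul]] at hbi
      rw [hbi, hr]
      norm_num
  | succ n =>
      rw [map_add, map_sub, coeff_C_mul, cA, cXA, coeff_succ_X_mul, map_add, map_sub,
        coeff_C_mul, cDA, cXDA, cA] at hbi
      simp only [Nat.succ_ne_zero, if_false, Nat.add_sub_cancel] at hbi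
      have hrn : r n = a n := by rw [hr]; simp [Nat.lt_succ_of_le (by omega : n ≤ e)]
      have hif1 : (if 1 ≤ n + 1 then a (n + 1 - 1) else 0) = a n := by simp
      have hif2 : (if n + 1 < e + 1 then a (n + 1) else 0) = r (n + 1) := by rw [hr]
      rw [hif1, hif2, hbi, hrn]
      push_cast
      ring
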